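/- Let M ∈ ℂ^{n×n} be Hurwitz, i.e., every eigenvalue of M has strictly negative real part. Then exp(tM) → 0 as t → ∞; consequently, every solution x of the linear ODE x′(t) = M x(t) satisfies lim_{t→∞} x(t) = 0. -/

import Mathlib

open Matrix Filter NormedSpace
open scoped Topology

lemma realAux17 (j : ℕ) {b : ℝ} (hb : 0 < b) :
    Tendsto (fun t : ℝ => t ^ j * Real.exp (-(b * t))) atTop (𝓝 0) := by
  have h1 : Tendsto (fun t : ℝ => b * t) atTop atTop :=
    Tendsto.const_mul_atTop hb tendsto_id
  have h2 := (Real.tendsto_pow_mul_exp_neg_atTop_nhds_zero j).comp h1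
  have h3 : Tendsto (fun t : ℝ => (b⁻¹) ^ j * ((b * t) ^ j * Real.exp (-(b * t)))) atTop
      (𝓝 ((b⁻¹) ^ j * 0)) := h2.const_mul _
  rw [mul_zero] at h3
  refine h3.congr fun t => ?_
  rw [← mul_assoc, ← mul_pow, inv_mul_cancel_left₀ hb.ne']

lemma scalarAux17 {μ : ℂ} (hμ : μ.re < 0) (j : ℕ) :
    Tendsto (fun t : ℝ => Complex.exp (t * μ) * (t : ℂ) ^ j) atTop (𝓝 0) := by
  rw [tendsto_zero_iff_norm_tendsto_zero]
  refine squeeze_zero' (Eventually.of_forall fun t => norm_nonneg _)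
    ?_ (realAux17 j (b := -μ.re) (by linarith))
  filter_upwards [eventually_ge_atTop (0 : ℝ)] with t ht
  have : ‖Complex.exp (t * μ) * (t : ℂ) ^ j‖ = Real.exp (t * μ.re) * t ^ j := by
    rw [norm_mul, norm_pow, Complex.norm_exp, Complex.norm_real,
      Real.norm_eq_abs, abs_of_nonneg ht]
    congr 2
    simp [Complex.mul_re]
  rw [this]
  have : -(-μ.re * t) = t * μ.re := by ring
  rw [this, mul_comm]

lemma genEigAux17 {n : ℕ} (M : Matrix (Fin n) (Fin n) ℂ) {μ : ℂ} (hμ : μ.re < 0) (k : ℕ)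
    (v : Fin n → ℂ) (hv : (M - μ • 1) ^ k *ᵥ v = 0) :
    Tendsto (fun t : ℝ => NormedSpace.exp (t • M) *ᵥ v) atTop (𝓝 0) := by
  letI : SeminormedRing (Matrix (Fin n) (Fin n) ℂ) := Matrix.linftyOpSemiNormedRing
  letI : NormedRing (Matrix (Fin n) (Fin n) ℂ) := Matrix.linftyOpNormedRing
  letI : NormedAlgebra ℂ (Matrix (Fin n) (Fin n) ℂ) := Matrix.linftyOpNormedAlgebra
  set N : Matrix (Fin n) (Fin n) ℂ := M - μ • 1 with hNdef
  set w : ℕ → (Fin n → ℂ) := fun j => N ^ j *ᵥ v with hw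
  -- the linear map A ↦ A *ᵥ v, as a continuous linear map
  let L : Matrix (Fin n) (Fin n) ℂ →ₗ[ℂ] (Fin n → ℂ) :=
    { toFun := fun A => A *ᵥ v
      map_add' := fun A B => Matrix.add_mulVec A B v
      map_smul' := fun c A => Matrix.smul_mulVec c A v }
  let Lc : Matrix (Fin n) (Fin n) ℂ →L[ℂ] (Fin n → ℂ) := LinearMap.toContinuousLinearMap L
  have hformula : ∀ t : ℝ, NormedSpace.exp (t • M) *ᵥ v =
      ∑ j ∈ Finset.range k, (Complex.exp (t * μ) * (((Nat.factorial j : ℕ) : ℂ)⁻¹ * (t : ℂ) ^ j)) • w j := by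
    intro t
    have h0 : (t : ℝ) • M = ((t : ℂ) * μ) • (1 : Matrix (Fin n) (Fin n) ℂ) + (t : ℂ) • N := by
      rw [hNdef, smul_sub, smul_smul, add_sub_cancel]
      ext i j'
      simp [Complex.real_smul]
    have hcomm : Commute (((t : ℂ) * μ) • (1 : Matrix (Fin n) (Fin n) ℂ)) ((t : ℂ) • N) :=
      ((Commute.one_left _).smul_left _).smul_right _
    have h1 : NormedSpace.exp ((t : ℝ) • M) =
        Complex.exp (t * μ) • NormedSpace.exp ((t : ℂ) • N) := by
      rw [h0, Matrix.exp_add_of_commute _ _ hcomm]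
      have h2 : ((t : ℂ) * μ) • (1 : Matrix (Fin n) (Fin n) ℂ)
          = algebraMap ℂ (Matrix (Fin n) (Fin n) ℂ) ((t : ℂ) * μ) :=
        (Algebra.algebraMap_eq_smul_one _).symm
      erw [h2, ← NormedSpace.algebraMap_exp_comm, Algebra.algebraMap_eq_smul_one,
        smul_mul_assoc, one_mul, Complex.exp_eq_exp_ℂ]
    rw [h1, Matrix.smul_mulVec]
    -- now compute exp (t • N) *ᵥ v
    have hsum : HasSum (fun j : ℕ => ((Nat.factorial j : ℕ) : ℂ)⁻¹ • ((t : ℂ) • N) ^ j)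
        (NormedSpace.exp ((t : ℂ) • N)) := by
      rw [NormedSpace.exp_eq_tsum ℂ]
      exact (NormedSpace.expSeries_summable' (𝕂 := ℂ) ((t : ℂ) • N)).hasSum
    have hsum2 := hsum.mapL Lc
    have heq : (fun j : ℕ => Lc (((Nat.factorial j : ℕ) : ℂ)⁻¹ • ((t : ℂ) • N) ^ j))
        = fun j : ℕ => (((Nat.factorial j : ℕ) : ℂ)⁻¹ * (t : ℂ) ^ j) • w j := by
      funext j
      show (((Nat.factorial j : ℕ) : ℂ)⁻¹ • ((t : ℂ) • N) ^ j) *ᵥ v = _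
      rw [smul_pow, Matrix.smul_mulVec, Matrix.smul_mulVec, smul_smul]
    rw [heq] at hsum2
    have hvanish : ∀ j ∉ Finset.range k, (((Nat.factorial j : ℕ) : ℂ)⁻¹ * (t : ℂ) ^ j) • w j = 0 := by
      intro j hj
      rw [Finset.mem_range, not_lt] at hj
      have : w j = 0 := by
        rw [hw]
        show N ^ j *ᵥ v = 0
        rw [← Nat.sub_add_cancel hj, pow_add, ← Matrix.mulVec_mulVec, hv, Matrix.mulVec_zero]
      rw [this, smul_zero]
    have := (hasSum_sum_of_ne_finset_zero hvanish).unique hsum2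
    rw [show Lc (NormedSpace.exp ((t : ℂ) • N)) = NormedSpace.exp ((t : ℂ) • N) *ᵥ v from rfl]
      at this
    rw [← this, Finset.smul_sum]
    refine Finset.sum_congr rfl fun j _ => ?_
    rw [smul_smul]
  refine Tendsto.congr (fun t => (hformula t).symm) ?_
  have h0 : (0 : Fin n → ℂ) = ∑ _j ∈ Finset.range k, (0 : Fin n → ℂ) := by simp
  rw [h0]
  refine tendsto_finset_sum _ fun j _ => ?_
  have hc : Tendsto (fun t : ℝ => Complex.exp (t * μ) * (((Nat.factorial j : ℕ) : ℂ)⁻¹ * (t : ℂ) ^ j))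
      atTop (𝓝 0) := by
    have := (scalarAux17 hμ j).mul_const (((Nat.factorial j : ℕ) : ℂ)⁻¹)
    rw [zero_mul] at this
    refine this.congr fun t => ?_
    ring
  have := hc.smul_const (w j)
  rwa [zero_smul] at this
lemma keyAux17 {n : ℕ} (M : Matrix (Fin n) (Fin n) ℂ)
    (hM : ∀ μ ∈ spectrum ℂ M, μ.re < 0) (v : Fin n → ℂ) :
    Tendsto (fun t : ℝ => NormedSpace.exp (t • M) *ᵥ v) atTop (𝓝 0) := by
  set f : Module.End ℂ (Fin n → ℂ) := Matrix.toLinAlgEquiv' M with hf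
  have hv : v ∈ (⊤ : Submodule ℂ (Fin n → ℂ)) := trivial
  rw [← Module.End.iSup_maxGenEigenspace_eq_top f] at hv
  refine Submodule.iSup_induction (motive := fun v =>
      Tendsto (fun t : ℝ => NormedSpace.exp (t • M) *ᵥ v) atTop (𝓝 0))
      (fun μ => f.maxGenEigenspace μ) hv ?_ ?_ ?_
  · intro μ x hx
    rcases eq_or_ne x 0 with rfl | hx0
    · simpa [Matrix.mulVec_zero] using tendsto_const_nhds
    -- μ is an eigenvalue
    obtain ⟨k, hk⟩ := (Module.End.mem_maxGenEigenspace f μ x).mp hx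
    have hxk : x ∈ f.genEigenspace μ k := by
      rw [Module.End.mem_genEigenspace]
      exact ⟨k, le_rfl, hk⟩
    have hgen : f.HasGenEigenvalue μ k := by
      rw [Module.End.hasGenEigenvalue_iff]
      intro hbot
      rw [hbot] at hxk
      exact hx0 hxk
    have hspec : μ ∈ spectrum ℂ M := by
      have := Module.End.hasEigenvalue_iff_mem_spectrum.mp
        (Module.End.hasEigenvalue_of_hasGenEigenvalue hgen)
      rwa [hf, AlgEquiv.spectrum_eq] at this
    have hμ : μ.re < 0 := hM μ hspec
    refine genEigAux17 M hμ k x ?_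
    -- translate hk
    have : (f - μ • 1) ^ k = Matrix.toLinAlgEquiv' ((M - μ • 1) ^ k) := by
      rw [map_pow, map_sub, _root_.map_smul, _root_.map_one]
    rw [this] at hk
    rw [Matrix.toLinAlgEquiv'_apply] at hk
    exact hk
  · simpa [Matrix.mulVec_zero] using tendsto_const_nhds
  · intro x y hx hy
    have := hx.add hy
    rw [add_zero] at this
    refine this.congr fun t => ?_
    rw [Matrix.mulVec_add]
/-- If `M` is Hurwitz then `exp(tM) → 0` as `t → ∞`, and every solution of
`x' = Mx` tends to `0`. -/
theorem stmt17 {n : ℕ}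
    (M : Matrix (Fin n) (Fin n) ℂ)
    (hM : ∀ μ ∈ spectrum ℂ M, μ.re < 0) :
    Tendsto (fun t : ℝ => NormedSpace.exp (t • M)) atTop
        (𝓝 (0 : Matrix (Fin n) (Fin n) ℂ)) ∧
    ∀ x : ℝ → Fin n → ℂ,
      (∀ t : ℝ, HasDerivAt x (M *ᵥ x t) t) →
      Tendsto x atTop (𝓝 0) := by
  have key := keyAux17 M hM
  constructor
  · refine tendsto_pi_nhds.mpr fun i => tendsto_pi_nhds.mpr fun j => ?_
    have h := (tendsto_pi_nhds.mp (key (Pi.single j 1))) i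
    refine h.congr fun t => ?_
    rw [Matrix.mulVec_single_one]
    rfl
  · intro x hx
    letI : SeminormedRing (Matrix (Fin n) (Fin n) ℂ) := Matrix.linftyOpSemiNormedRing
    letI : NormedRing (Matrix (Fin n) (Fin n) ℂ) := Matrix.linftyOpNormedRing
    letI : NormedAlgebra ℂ (Matrix (Fin n) (Fin n) ℂ) := Matrix.linftyOpNormedAlgebra
    letI : NormedAlgebra ℝ (Matrix (Fin n) (Fin n) ℂ) := Matrix.linftyOpNormedAlgebra
    have hexp : (NormedSpace.exp : Matrix (Fin n) (Fin n) ℂ → Matrix (Fin n) (Fin n) ℂ)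
        = NormedSpace.exp := rfl
    let Ψ₀ : Matrix (Fin n) (Fin n) ℂ →ₗ[ℝ] ((Fin n → ℂ) →L[ℝ] (Fin n → ℂ)) :=
      { toFun := fun A => LinearMap.toContinuousLinearMap ((Matrix.mulVecLin A).restrictScalars ℝ)
        map_add' := by
          intro A B
          ext v i
          simp [Matrix.add_mulVec]
        map_smul' := by
          intro r A
          ext v i
          simp [Matrix.smul_mulVec] }
    let Ψ : Matrix (Fin n) (Fin n) ℂ →L[ℝ] ((Fin n → ℂ) →L[ℝ] (Fin n → ℂ)) :=
      LinearMap.toContinuousLinearMap Ψ₀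
    have hΨ : ∀ (A : Matrix (Fin n) (Fin n) ℂ) (u : Fin n → ℂ), Ψ A u = A *ᵥ u :=
      fun A u => rfl
    have hg : ∀ t : ℝ,
        HasDerivAt (fun s : ℝ => Ψ (NormedSpace.exp ((-s) • M)) (x s)) 0 t := by
      intro t
      set E : Matrix (Fin n) (Fin n) ℂ := NormedSpace.exp ((-t) • M) with hE
      have h1 : HasDerivAt (fun u : ℝ => NormedSpace.exp (u • M))
          (M * NormedSpace.exp ((-t) • M)) (-t) := hasDerivAt_exp_smul_const' M (-t)
      have hneg : HasDerivAt (fun s : ℝ => -s) (-1) t := (hasDerivAt_id t).neg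
      have h2 : HasDerivAt (fun s : ℝ => NormedSpace.exp ((-s) • M))
          ((-1 : ℝ) • (M * NormedSpace.exp ((-t) • M))) t := HasDerivAt.scomp t h1 hneg
      rw [hexp] at h2
      have h3 : HasDerivAt (fun s : ℝ => Ψ (NormedSpace.exp ((-s) • M)))
          (Ψ ((-1 : ℝ) • (M * E))) t := Ψ.hasFDerivAt.comp_hasDerivAt t h2
      have h4 := h3.clm_apply (hx t)
      have hval : Ψ ((-1 : ℝ) • (M * E)) (x t) + Ψ E (M *ᵥ x t) = 0 := by
        have hcomm : Commute M E := ((Commute.refl M).smul_right (-t : ℝ)).exp_right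
        rw [hΨ, hΨ, Matrix.mulVec_mulVec, ← hcomm.eq, Matrix.smul_mulVec,
          neg_smul, one_smul, neg_add_cancel]
      rwa [hval] at h4
    have hconst : ∀ t : ℝ, Ψ (NormedSpace.exp ((-t) • M)) (x t)
        = Ψ (NormedSpace.exp ((-(0 : ℝ)) • M)) (x 0) :=
      fun t => is_const_of_deriv_eq_zero (fun s => (hg s).differentiableAt)
        (fun s => (hg s).deriv) t 0
    have hxt : ∀ t : ℝ, x t = NormedSpace.exp (t • M) *ᵥ x 0 := by
      intro t
      have h5 := hconst t
      rw [hΨ, hΨ] at h5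
      have h6 : NormedSpace.exp ((-(0 : ℝ)) • M) *ᵥ x 0 = x 0 := by
        rw [neg_zero, zero_smul, NormedSpace.exp_zero, Matrix.one_mulVec]
      rw [h6] at h5
      have hcomm : Commute ((t : ℝ) • M) ((-t : ℝ) • M) :=
        ((Commute.refl M).smul_right (-t : ℝ)).smul_left t
      calc x t = (NormedSpace.exp (t • M) * NormedSpace.exp ((-t) • M)) *ᵥ x t := by
            rw [← Matrix.exp_add_of_commute _ _ hcomm, ← add_smul, add_neg_cancel, zero_smul,
              NormedSpace.exp_zero, Matrix.one_mulVec]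
        _ = NormedSpace.exp (t • M) *ᵥ (NormedSpace.exp ((-t) • M) *ᵥ x t) := by
            rw [Matrix.mulVec_mulVec]
        _ = NormedSpace.exp (t • M) *ᵥ x 0 := by rw [h5]
    exact Tendsto.congr (fun t => (hxt t).symm) (key (x 0))
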